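/- Let x ∈ Δ and let (τ_n) be the directive sequence of x. Then (τ_n) is primitive if and only if there is no r ∈ ℕ such that τ_{r+2i} = τ_{r+2i+1} for all i ∈ ℕ (i.e., if and only if (τ_n) does not belong to C*{c1c1, c2c2}^ω). -/

import Mathlib

/-- Letters `0, 1, 2` stand for the letters `1, 2, 3` of the paper. -/
abbrev Letter := Fin 3

/-- A finite word over the alphabet `{1,2,3}`. -/
abbrev Word := List Letter

/-- Apply a substitution (given by its values on letters) to a finite word. -/
def applySub (σ : Letter → Word) (w : Word) : Word := (w.map σ).flatten

/-- The substitution `c₁ : 1 ↦ 1, 2 ↦ 13, 3 ↦ 2`. -/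
def c1 : Letter → Word := ![[0], [0, 2], [1]]

/-- The substitution `c₂ : 1 ↦ 2, 2 ↦ 13, 3 ↦ 3`. -/
def c2 : Letter → Word := ![[1], [0, 2], [2]]

/-- `comps τ r k` is the composition `τ_r ∘ τ_{r+1} ∘ ⋯ ∘ τ_{r+k-1}` acting on words. -/
def comps (τ : ℕ → Letter → Word) : ℕ → ℕ → Word → Word
  | _, 0 => id
  | r, k + 1 => applySub (τ r) ∘ comps τ (r + 1) k

/-- The continued fraction map `F_C` on `ℝ³` (defined on the nonnegative octant). -/
noncomputable def FC (x : Fin 3 → ℝ) : Fin 3 → ℝ :=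
  if x 2 ≤ x 0 then ![x 0 - x 2, x 2, x 1] else ![x 1, x 0, x 2 - x 0]

/-- The directive sequence of `x`: `τ_n = c1` if the first coordinate of `F_C^n(x)`
is at least its third coordinate, and `τ_n = c2` otherwise. -/
noncomputable def dirC (x : Fin 3 → ℝ) (n : ℕ) : Letter → Word :=
  if (FC^[n] x) 2 ≤ (FC^[n] x) 0 then c1 else c2

/-- A sequence of substitutions is primitive if for every `r` there is `r' > r` such
that every letter occurs in every image `τ_r τ_{r+1} ⋯ τ_{r'-1}(a)`. -/
def Primitive (τ : ℕ → Letter → Word) : Prop :=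
  ∀ r : ℕ, ∃ r', r < r' ∧ ∀ a b : Letter, b ∈ comps τ r (r' - r) [a]


lemma mem_applySub {σ : Letter → Word} {w : Word} {b : Letter} :
    b ∈ applySub σ w ↔ ∃ a ∈ w, b ∈ σ a := by
  simp [applySub, List.mem_flatten]

lemma applySub_append (σ : Letter → Word) (u v : Word) :
    applySub σ (u ++ v) = applySub σ u ++ applySub σ v := by
  simp [applySub]

lemma iter_append (σ : Letter → Word) (k : ℕ) (u v : Word) :
    (applySub σ)^[k] (u ++ v) = (applySub σ)^[k] u ++ (applySub σ)^[k] v := by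
  induction k generalizing u v with
  | zero => simp
  | succ k ih => simp [Function.iterate_succ_apply, applySub_append, ih]

lemma iter_nil (σ : Letter → Word) (k : ℕ) : (applySub σ)^[k] [] = [] := by
  induction k with
  | zero => rfl
  | succ k ih => simp [Function.iterate_succ_apply, applySub, ih]

lemma mem_iter {σ : Letter → Word} (k : ℕ) (w : Word) (b : Letter) :
    b ∈ (applySub σ)^[k] w ↔ ∃ a ∈ w, b ∈ (applySub σ)^[k] [a] := by
  induction w with
  | nil => simp [iter_nil]
  | cons a w ih =>
      have h : (a :: w : Word) = [a] ++ w := rfl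
      rw [h, iter_append]
      simp [ih]

lemma iter0 (j : ℕ) : (applySub c1)^[j] [(0:Letter)] = [0] := by
  induction j with
  | zero => rfl
  | succ j ih =>
      rw [Function.iterate_succ_apply]
      simpa [show applySub c1 [(0:Letter)] = [0] from rfl] using ih

lemma iter2' (j : ℕ) : (applySub c2)^[j] [(2:Letter)] = [2] := by
  induction j with
  | zero => rfl
  | succ j ih =>
      rw [Function.iterate_succ_apply]
      simpa [show applySub c2 [(2:Letter)] = [2] from rfl] using ih

lemma iter12 (k : ℕ) : (applySub c1)^[k+1] [(2:Letter)] = (applySub c1)^[k] [1] := by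
  rw [Function.iterate_succ_apply]; rfl

lemma iter20 (k : ℕ) : (applySub c2)^[k+1] [(0:Letter)] = (applySub c2)^[k] [1] := by
  rw [Function.iterate_succ_apply]; rfl

lemma S_rec (k : ℕ) : (applySub c1)^[k+2] [1] = 0 :: (applySub c1)^[k] [1] := by
  have h1 : (applySub c1)^[k+2] [1] = (applySub c1)^[k+1] ([0] ++ [2]) := by
    rw [show k+2 = (k+1)+1 from rfl, Function.iterate_succ_apply]; rfl
  rw [h1, iter_append, iter0, iter12]; rfl

lemma T_rec (k : ℕ) : (applySub c2)^[k+2] [1] = (applySub c2)^[k] [1] ++ [2] := by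
  have h1 : (applySub c2)^[k+2] [1] = (applySub c2)^[k+1] ([0] ++ [2]) := by
    rw [show k+2 = (k+1)+1 from rfl, Function.iterate_succ_apply]; rfl
  rw [h1, iter_append, iter20, iter2']

lemma m1_0 (k : ℕ) : (0:Letter) ∈ (applySub c1)^[k+1] [1] := by
  match k with
  | 0 => decide
  | k+1 => rw [show k+1+1 = k+2 from rfl, S_rec]; exact List.mem_cons_self

lemma m1_odd (j : ℕ) : (2:Letter) ∈ (applySub c1)^[2*j+1] [1] := by
  induction j with
  | zero => decide
  | succ j ih =>
      rw [show 2*(j+1)+1 = (2*j+1)+2 by ring, S_rec]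
      exact List.mem_cons_of_mem _ ih

lemma m1_even (j : ℕ) : (1:Letter) ∈ (applySub c1)^[2*j+2] [1] := by
  induction j with
  | zero => decide
  | succ j ih =>
      rw [show 2*(j+1)+2 = (2*j+2)+2 by ring, S_rec]
      exact List.mem_cons_of_mem _ ih

lemma m2_2 (k : ℕ) : (2:Letter) ∈ (applySub c2)^[k+1] [1] := by
  match k with
  | 0 => decide
  | k+1 => rw [show k+1+1 = k+2 from rfl, T_rec]; simp

lemma m2_odd (j : ℕ) : (0:Letter) ∈ (applySub c2)^[2*j+1] [1] := by
  induction j with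
  | zero => decide
  | succ j ih =>
      rw [show 2*(j+1)+1 = (2*j+1)+2 by ring, T_rec]
      exact List.mem_append_left _ ih

lemma m2_even (j : ℕ) : (1:Letter) ∈ (applySub c2)^[2*j+2] [1] := by
  induction j with
  | zero => decide
  | succ j ih =>
      rw [show 2*(j+1)+2 = (2*j+2)+2 by ring, T_rec]
      exact List.mem_append_left _ ih

lemma letter_cases : ∀ a : Letter, a = 0 ∨ a = 1 ∨ a = 2 := by decide

lemma fin1 (m : ℕ) (v : Word) (h0 : (0:Letter) ∈ v)
    (h12 : (1:Letter) ∈ v ∨ (2:Letter) ∈ v) (b : Letter) :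
    b ∈ applySub c1 ((applySub c2)^[2*m+1] v) := by
  have h1 : (1:Letter) ∈ (applySub c2)^[2*m+1] v := by
    match m with
    | 0 => exact (mem_iter _ _ _).2 ⟨0, h0, by decide⟩
    | j+1 =>
        refine (mem_iter _ _ _).2 ⟨0, h0, ?_⟩
        rw [show 2*(j+1)+1 = (2*j+2)+1 by ring, iter20]
        exact m2_even j
  have h2 : (2:Letter) ∈ (applySub c2)^[2*m+1] v := by
    match m with
    | 0 =>
        rcases h12 with h | h
        · exact (mem_iter _ _ _).2 ⟨1, h, by decide⟩
        · exact (mem_iter _ _ _).2 ⟨2, h, by decide⟩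
    | j+1 =>
        refine (mem_iter _ _ _).2 ⟨0, h0, ?_⟩
        rw [show 2*(j+1)+1 = (2*j+2)+1 by ring, iter20]
        exact m2_2 (2*j+1)
  rcases letter_cases b with rfl | rfl | rfl
  · exact mem_applySub.2 ⟨1, h1, by decide⟩
  · exact mem_applySub.2 ⟨2, h2, by decide⟩
  · exact mem_applySub.2 ⟨1, h1, by decide⟩

lemma mid1 (n : ℕ) (v : Word)
    (h : (1:Letter) ∈ v ∨ ((0:Letter) ∈ v ∧ (2:Letter) ∈ v)) :
    (0:Letter) ∈ (applySub c1)^[n+1] v ∧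
      ((1:Letter) ∈ (applySub c1)^[n+1] v ∨ (2:Letter) ∈ (applySub c1)^[n+1] v) := by
  rcases h with h1 | ⟨h0, h2⟩
  · refine ⟨(mem_iter _ _ _).2 ⟨1, h1, m1_0 n⟩, ?_⟩
    rcases Nat.even_or_odd n with ⟨j, hj⟩ | ⟨j, hj⟩
    · refine Or.inr ((mem_iter _ _ _).2 ⟨1, h1, ?_⟩)
      rw [show n+1 = 2*j+1 by omega]; exact m1_odd j
    · refine Or.inl ((mem_iter _ _ _).2 ⟨1, h1, ?_⟩)
      rw [show n+1 = 2*j+2 by omega]; exact m1_even j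
  · refine ⟨(mem_iter _ _ _).2 ⟨0, h0, by rw [iter0]; exact List.mem_singleton.2 rfl⟩, ?_⟩
    match n with
    | 0 => exact Or.inl ((mem_iter _ _ _).2 ⟨2, h2, by decide⟩)
    | k+1 =>
        rcases Nat.even_or_odd (k+1) with ⟨j, hj⟩ | ⟨j, hj⟩
        · refine Or.inl ((mem_iter _ _ _).2 ⟨2, h2, ?_⟩)
          rw [iter12, show k+1 = 2*(j-1)+2 by omega]; exact m1_even (j-1)
        · refine Or.inr ((mem_iter _ _ _).2 ⟨2, h2, ?_⟩)
          rw [iter12, show k+1 = 2*j+1 by omega]; exact m1_odd j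

lemma start1 (l : ℕ) (a : Letter) :
    (1:Letter) ∈ (applySub c2)^[l+1] (applySub c1 [a]) ∨
      ((0:Letter) ∈ (applySub c2)^[l+1] (applySub c1 [a]) ∧
       (2:Letter) ∈ (applySub c2)^[l+1] (applySub c1 [a])) := by
  rcases letter_cases a with rfl | rfl | rfl
  · rw [show applySub c1 [(0:Letter)] = [0] by decide, iter20]
    match l with
    | 0 => exact Or.inl (by decide)
    | k+1 =>
        rcases Nat.even_or_odd (k+1) with ⟨j, hj⟩ | ⟨j, hj⟩
        · exact Or.inl (by rw [show k+1 = 2*(j-1)+2 by omega]; exact m2_even (j-1))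
        · exact Or.inr ⟨by rw [show k+1 = 2*j+1 by omega]; exact m2_odd j, m2_2 k⟩
  · rw [show applySub c1 [(1:Letter)] = [0] ++ [2] by decide, iter_append, iter20, iter2']
    match l with
    | 0 => exact Or.inl (by decide)
    | k+1 =>
        rcases Nat.even_or_odd (k+1) with ⟨j, hj⟩ | ⟨j, hj⟩
        · exact Or.inl (List.mem_append_left _
            (by rw [show k+1 = 2*(j-1)+2 by omega]; exact m2_even (j-1)))
        · exact Or.inr ⟨List.mem_append_left _
            (by rw [show k+1 = 2*j+1 by omega]; exact m2_odd j),
            List.mem_append_right _ (by decide)⟩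
  · rw [show applySub c1 [(2:Letter)] = [1] by decide]
    rcases Nat.even_or_odd l with ⟨j, hj⟩ | ⟨j, hj⟩
    · exact Or.inr ⟨by rw [show l+1 = 2*j+1 by omega]; exact m2_odd j, m2_2 l⟩
    · exact Or.inl (by rw [show l+1 = 2*j+2 by omega]; exact m2_even j)

lemma key1 (m n l : ℕ) (a b : Letter) :
    b ∈ applySub c1 ((applySub c2)^[2*m+1] ((applySub c1)^[n+1]
        ((applySub c2)^[l+1] (applySub c1 [a])))) := by
  obtain ⟨h0, h12⟩ := mid1 n _ (start1 l a)
  exact fin1 m _ h0 h12 b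

lemma fin2 (m : ℕ) (v : Word) (h2 : (2:Letter) ∈ v)
    (h01 : (0:Letter) ∈ v ∨ (1:Letter) ∈ v) (b : Letter) :
    b ∈ applySub c2 ((applySub c1)^[2*m+1] v) := by
  have h1 : (1:Letter) ∈ (applySub c1)^[2*m+1] v := by
    match m with
    | 0 => exact (mem_iter _ _ _).2 ⟨2, h2, by decide⟩
    | j+1 =>
        refine (mem_iter _ _ _).2 ⟨2, h2, ?_⟩
        rw [show 2*(j+1)+1 = (2*j+2)+1 by ring, iter12]
        exact m1_even j
  have h0 : (0:Letter) ∈ (applySub c1)^[2*m+1] v := by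
    match m with
    | 0 =>
        rcases h01 with h | h
        · exact (mem_iter _ _ _).2 ⟨0, h, by decide⟩
        · exact (mem_iter _ _ _).2 ⟨1, h, by decide⟩
    | j+1 =>
        refine (mem_iter _ _ _).2 ⟨2, h2, ?_⟩
        rw [show 2*(j+1)+1 = (2*j+2)+1 by ring, iter12]
        exact m1_0 (2*j+1)
  rcases letter_cases b with rfl | rfl | rfl
  · exact mem_applySub.2 ⟨1, h1, by decide⟩
  · exact mem_applySub.2 ⟨0, h0, by decide⟩
  · exact mem_applySub.2 ⟨1, h1, by decide⟩

lemma mid2 (n : ℕ) (v : Word)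
    (h : (1:Letter) ∈ v ∨ ((0:Letter) ∈ v ∧ (2:Letter) ∈ v)) :
    (2:Letter) ∈ (applySub c2)^[n+1] v ∧
      ((0:Letter) ∈ (applySub c2)^[n+1] v ∨ (1:Letter) ∈ (applySub c2)^[n+1] v) := by
  rcases h with h1 | ⟨h0, h2⟩
  · refine ⟨(mem_iter _ _ _).2 ⟨1, h1, m2_2 n⟩, ?_⟩
    rcases Nat.even_or_odd n with ⟨j, hj⟩ | ⟨j, hj⟩
    · refine Or.inl ((mem_iter _ _ _).2 ⟨1, h1, ?_⟩)
      rw [show n+1 = 2*j+1 by omega]; exact m2_odd j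
    · refine Or.inr ((mem_iter _ _ _).2 ⟨1, h1, ?_⟩)
      rw [show n+1 = 2*j+2 by omega]; exact m2_even j
  · refine ⟨(mem_iter _ _ _).2 ⟨2, h2, by rw [iter2']; exact List.mem_singleton.2 rfl⟩, ?_⟩
    match n with
    | 0 => exact Or.inr ((mem_iter _ _ _).2 ⟨0, h0, by decide⟩)
    | k+1 =>
        rcases Nat.even_or_odd (k+1) with ⟨j, hj⟩ | ⟨j, hj⟩
        · refine Or.inr ((mem_iter _ _ _).2 ⟨0, h0, ?_⟩)
          rw [iter20, show k+1 = 2*(j-1)+2 by omega]; exact m2_even (j-1)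
        · refine Or.inl ((mem_iter _ _ _).2 ⟨0, h0, ?_⟩)
          rw [iter20, show k+1 = 2*j+1 by omega]; exact m2_odd j

lemma start2 (l : ℕ) (a : Letter) :
    (1:Letter) ∈ (applySub c1)^[l+1] (applySub c2 [a]) ∨
      ((0:Letter) ∈ (applySub c1)^[l+1] (applySub c2 [a]) ∧
       (2:Letter) ∈ (applySub c1)^[l+1] (applySub c2 [a])) := by
  rcases letter_cases a with rfl | rfl | rfl
  · rw [show applySub c2 [(0:Letter)] = [1] by decide]
    rcases Nat.even_or_odd l with ⟨j, hj⟩ | ⟨j, hj⟩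
    · exact Or.inr ⟨m1_0 l, by rw [show l+1 = 2*j+1 by omega]; exact m1_odd j⟩
    · exact Or.inl (by rw [show l+1 = 2*j+2 by omega]; exact m1_even j)
  · rw [show applySub c2 [(1:Letter)] = [0] ++ [2] by decide, iter_append, iter0, iter12]
    match l with
    | 0 => exact Or.inl (by decide)
    | k+1 =>
        rcases Nat.even_or_odd (k+1) with ⟨j, hj⟩ | ⟨j, hj⟩
        · exact Or.inl (List.mem_append_right _
            (by rw [show k+1 = 2*(j-1)+2 by omega]; exact m1_even (j-1)))
        · exact Or.inr ⟨List.mem_append_left _ (by decide),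
            List.mem_append_right _
              (by rw [show k+1 = 2*j+1 by omega]; exact m1_odd j)⟩
  · rw [show applySub c2 [(2:Letter)] = [2] by decide, iter12]
    match l with
    | 0 => exact Or.inl (by decide)
    | k+1 =>
        rcases Nat.even_or_odd (k+1) with ⟨j, hj⟩ | ⟨j, hj⟩
        · exact Or.inl (by rw [show k+1 = 2*(j-1)+2 by omega]; exact m1_even (j-1))
        · exact Or.inr ⟨m1_0 k, by rw [show k+1 = 2*j+1 by omega]; exact m1_odd j⟩

lemma key2 (m n l : ℕ) (a b : Letter) :
    b ∈ applySub c2 ((applySub c1)^[2*m+1] ((applySub c2)^[n+1]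
        ((applySub c1)^[l+1] (applySub c2 [a])))) := by
  obtain ⟨h2, h01⟩ := mid2 n _ (start2 l a)
  exact fin2 m _ h2 h01 b


lemma comps_succ (τ : ℕ → Letter → Word) (r k : ℕ) (w : Word) :
    comps τ r (k+1) w = applySub (τ r) (comps τ (r+1) k w) := rfl

lemma comps_split (τ : ℕ → Letter → Word) (k1 k2 r : ℕ) (w : Word) :
    comps τ r (k1+k2) w = comps τ r k1 (comps τ (r+k1) k2 w) := by
  induction k1 generalizing r with
  | zero => simp [comps]
  | succ k1 ih =>
      rw [show k1+1+k2 = (k1+k2)+1 by omega, comps_succ, ih (r+1), comps_succ,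
        show r+1+k1 = r+(k1+1) by omega]

lemma comps_const (τ : ℕ → Letter → Word) (c : Letter → Word) :
    ∀ (k r : ℕ) (w : Word), (∀ j < k, τ (r+j) = c) →
      comps τ r k w = (applySub c)^[k] w := by
  intro k
  induction k with
  | zero => intro r w _; rfl
  | succ k ih =>
      intro r w h
      rw [comps_succ, ih (r+1) w (fun j hj => by
        have hh := h (j+1) (by omega)
        rwa [show r+(j+1) = r+1+j by omega] at hh)]
      rw [Function.iterate_succ_apply']
      congr 1
      simpa using h 0 (by omega)

lemma sub_onto (c : Letter → Word) (hc : c = c1 ∨ c = c2) (w : Word)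
    (hw : ∀ a : Letter, a ∈ w) (b : Letter) : b ∈ applySub c w := by
  rcases hc with rfl | rfl
  · rcases letter_cases b with rfl | rfl | rfl
    · exact mem_applySub.2 ⟨0, hw 0, by decide⟩
    · exact mem_applySub.2 ⟨2, hw 2, by decide⟩
    · exact mem_applySub.2 ⟨1, hw 1, by decide⟩
  · rcases letter_cases b with rfl | rfl | rfl
    · exact mem_applySub.2 ⟨1, hw 1, by decide⟩
    · exact mem_applySub.2 ⟨0, hw 0, by decide⟩
    · exact mem_applySub.2 ⟨1, hw 1, by decide⟩

def Full (τ : ℕ → Letter → Word) (r k : ℕ) : Prop :=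
  ∀ a b : Letter, b ∈ comps τ r k [a]

lemma full_left (τ : ℕ → Letter → Word) (hτ : ∀ n, τ n = c1 ∨ τ n = c2) :
    ∀ (d k r : ℕ), Full τ (r+d) k → Full τ r (k+d) := by
  intro d
  induction d with
  | zero => intro k r h; simpa using h
  | succ d ih =>
      intro k r h
      have h1 : Full τ (r+1) (k+d) := ih k (r+1) (by rwa [show r+1+d = r+(d+1) by omega])
      intro a b
      rw [show k+(d+1) = (k+d)+1 by omega, comps_succ]
      exact sub_onto _ (hτ r) _ (fun a' => h1 a a') b

lemma run_const (τ : ℕ → Letter → Word) (a k : ℕ)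
    (h : ∀ j < k, τ (a+j) = τ (a+j+1)) : ∀ j ≤ k, τ (a+j) = τ a := by
  intro j hj
  induction j with
  | zero => rfl
  | succ j ih =>
      rw [show a+(j+1) = a+j+1 by omega, ← h j (by omega)]
      exact ih (by omega)

lemma other_sub {u v : Letter → Word} (hu : u = c1 ∨ u = c2) (hv : v = c1 ∨ v = c2)
    (huv : u ≠ v) : (u = c1 ∧ v = c2) ∨ (u = c2 ∧ v = c1) := by
  have h12 : c1 ≠ c2 := by decide
  rcases hu with rfl | rfl <;> rcases hv with rfl | rfl
  · exact absurd rfl huv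
  · exact Or.inl ⟨rfl, rfl⟩
  · exact Or.inr ⟨rfl, rfl⟩
  · exact absurd rfl huv

lemma pairfree (τ : ℕ → Letter → Word) (hτ : ∀ n, τ n = c1 ∨ τ n = c2) :
    ∀ (k r : ℕ) (w : Word), (∀ i, τ (r + 2*i) = τ (r + 2*i + 1)) →
      (1:Letter) ∉ w → (1:Letter) ∉ comps τ r (2*k) w := by
  have dd : ∀ (c : Letter → Word), (c = c1 ∨ c = c2) → ∀ v : Word,
      (1:Letter) ∉ v → (1:Letter) ∉ applySub c (applySub c v) := by
    intro c hc v hv h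
    obtain ⟨a, ha, h1a⟩ := mem_applySub.1 h
    obtain ⟨a', ha', haa'⟩ := mem_applySub.1 ha
    have hne : a' ≠ 1 := fun e => hv (e ▸ ha')
    rcases hc with rfl | rfl
    · exact (by decide : ∀ a' a : Letter, a' ≠ 1 → a ∈ c1 a' → 1 ∈ c1 a → False)
        a' a hne haa' h1a
    · exact (by decide : ∀ a' a : Letter, a' ≠ 1 → a ∈ c2 a' → 1 ∈ c2 a → False)
        a' a hne haa' h1a
  intro k
  induction k with
  | zero => intro r w _ hw; simpa [comps] using hw
  | succ k ih =>
      intro r w hpair hw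
      rw [show 2*(k+1) = (2*k+1)+1 by omega, comps_succ, comps_succ]
      have hv : (1:Letter) ∉ comps τ (r+1+1) (2*k) w := by
        rw [show r+1+1 = r+2 by omega]
        refine ih (r+2) w (fun i => ?_) hw
        have hh := hpair (i+1)
        rw [show r+2*(i+1) = r+2+2*i by omega] at hh
        exact hh
      have heq : τ (r+1) = τ r := by
        have := hpair 0
        simpa using this.symm
      rw [heq]
      exact dd (τ r) (hτ r) _ hv


theorem stmt5 (x : Fin 3 → ℝ) (hpos : ∀ i, 0 ≤ x i) (hsum : x 0 + x 1 + x 2 = 1) :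
    Primitive (dirC x) ↔
      ¬ ∃ r : ℕ, ∀ i : ℕ, dirC x (r + 2 * i) = dirC x (r + 2 * i + 1) := by
  classical
  set τ := dirC x with hτdef
  have hτ : ∀ n, τ n = c1 ∨ τ n = c2 := by
    intro n
    rw [hτdef]
    unfold dirC
    split
    · exact Or.inl rfl
    · exact Or.inr rfl
  constructor
  · rintro hP ⟨r, hpair⟩
    obtain ⟨r', hrr', hfull⟩ := hP r
    have hk1 : 1 ≤ r' - r := by omega
    rcases Nat.even_or_odd (r' - r) with ⟨j, hj⟩ | ⟨j, hj⟩
    · have h1 := hfull 0 1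
      have h2 := pairfree τ hτ j r [0] hpair (by decide)
      rw [show r' - r = 2*j by omega] at h1
      exact h2 h1
    · have h1 := hfull 1 1
      have h2 : (1:Letter) ∉ comps τ r (2*j) (applySub (τ (r+2*j)) [1]) := by
        refine pairfree τ hτ j r _ hpair ?_
        rcases hτ (r+2*j) with he | he <;> rw [he] <;> decide
      rw [show r' - r = 2*j+1 by omega, comps_split τ (2*j) 1 r] at h1
      have e : comps τ (r+2*j) 1 [1] = applySub (τ (r+2*j)) [1] := rfl
      rw [e] at h1
      exact h2 h1
  · intro hno r
    push_neg at hno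
    have H' : ∀ s : ℕ, ∃ p, s ≤ p ∧ τ p ≠ τ (p+1) ∧ p % 2 = s % 2 := by
      intro s
      obtain ⟨i, hi⟩ := hno s
      exact ⟨s+2*i, by omega, by
        rw [show s+2*i+1 = s+2*i+1 from rfl]
        exact fun h => hi (by
          rw [show s+2*i = s+2*i from rfl] at h
          simpa [show s + 2*i + 1 = s + 2*i + 1 from rfl] using h), by omega⟩
    have H'' : ∀ s : ℕ, ∃ p, s < p ∧ τ p ≠ τ (p+1) := by
      intro s
      obtain ⟨p, h1, h2, _⟩ := H' (s+1)
      exact ⟨p, by omega, h2⟩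
    obtain ⟨p1, hp1r, hp1m, _⟩ := H' r
    have hexQ : ∃ q, p1 < q ∧ τ q ≠ τ (q+1) ∧ q % 2 ≠ p1 % 2 := by
      obtain ⟨p, h1, h2, h3⟩ := H' (p1+1)
      exact ⟨p, by omega, h2, by omega⟩
    obtain ⟨hQ1, hQ2, hQ3⟩ := Nat.find_spec hexQ
    set Q := Nat.find hexQ with hQdef
    have hple : p1 ≤ Q - 1 := by omega
    have hPspec : p1 ≤ Nat.findGreatest (fun p => p1 ≤ p ∧ τ p ≠ τ (p+1)) (Q-1) ∧
        τ (Nat.findGreatest (fun p => p1 ≤ p ∧ τ p ≠ τ (p+1)) (Q-1)) ≠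
          τ (Nat.findGreatest (fun p => p1 ≤ p ∧ τ p ≠ τ (p+1)) (Q-1) + 1) :=
      Nat.findGreatest_spec (P := fun p => p1 ≤ p ∧ τ p ≠ τ (p+1)) hple ⟨le_refl p1, hp1m⟩
    set P := Nat.findGreatest (fun p => p1 ≤ p ∧ τ p ≠ τ (p+1)) (Q-1) with hPdef
    have hPle : P ≤ Q - 1 := Nat.findGreatest_le _
    have hPltQ : P < Q := by omega
    have hPpar : P % 2 = p1 % 2 := by
      by_contra hpar
      have hlt : p1 < P := by omega
      exact Nat.find_min hexQ (hQdef ▸ hPltQ) ⟨hlt, hPspec.2, by omega⟩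
    have hPmax : ∀ j, P < j → j < Q → τ j = τ (j+1) := by
      intro j h1 h2
      by_contra hj
      exact Nat.findGreatest_is_greatest (hPdef ▸ h1) (by omega) ⟨by omega, hj⟩
    have hexS : ∃ u, Q < u ∧ τ u ≠ τ (u+1) := H'' Q
    obtain ⟨hS1, hS2⟩ := Nat.find_spec hexS
    set S := Nat.find hexS with hSdef
    have hSmin : ∀ j, Q < j → j < S → τ j = τ (j+1) := by
      intro j h1 h2
      by_contra hj
      exact Nat.find_min hexS (hSdef ▸ h2) ⟨h1, hj⟩
    have hexT : ∃ u, S < u ∧ τ u ≠ τ (u+1) := H'' S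
    obtain ⟨hT1, hT2⟩ := Nat.find_spec hexT
    set T := Nat.find hexT with hTdef
    have hTmin : ∀ j, S < j → j < T → τ j = τ (j+1) := by
      intro j h1 h2
      by_contra hj
      exact Nat.find_min hexT (hTdef ▸ h2) ⟨h1, hj⟩
    obtain ⟨m, hm⟩ : ∃ m, Q = P + (2*m+1) := ⟨(Q-P-1)/2, by omega⟩
    obtain ⟨n, hn⟩ : ∃ n, S = Q + (n+1) := ⟨S-Q-1, by omega⟩
    obtain ⟨l, hl⟩ : ∃ l, T = S + (l+1) := ⟨T-S-1, by omega⟩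
    have hyrun : ∀ j < 2*m+1, τ (P+1+j) = τ (P+1) := by
      intro j hj
      exact run_const τ (P+1) (2*m)
        (fun j' hj' => hPmax (P+1+j') (by omega) (by omega)) j (by omega)
    have hτQ : τ Q = τ (P+1) := by
      have h := hyrun (2*m) (by omega)
      rwa [show P+1+2*m = Q by omega] at h
    have hxrun : ∀ j < n+1, τ (Q+1+j) = τ (Q+1) := by
      intro j hj
      exact run_const τ (Q+1) n
        (fun j' hj' => hSmin (Q+1+j') (by omega) (by omega)) j (by omega)
    have hτS : τ S = τ (Q+1) := by
      have h := hxrun n (by omega)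
      rwa [show Q+1+n = S by omega] at h
    have hyrun2 : ∀ j < l+1, τ (S+1+j) = τ (S+1) := by
      intro j hj
      exact run_const τ (S+1) l
        (fun j' hj' => hTmin (S+1+j') (by omega) (by omega)) j (by omega)
    have hτT : τ T = τ (S+1) := by
      have h := hyrun2 l (by omega)
      rwa [show S+1+l = T by omega] at h
    have hfullP : Full τ P (1+((2*m+1)+((n+1)+((l+1)+1)))) := by
      rcases other_sub (hτ P) (hτ (P+1)) hPspec.2 with ⟨hx, hy⟩ | ⟨hx, hy⟩
      · have hQ1' : τ (Q+1) = c1 := by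
          rcases hτ (Q+1) with h | h
          · exact h
          · exact absurd (by rw [hτQ, hy, h]) hQ2
        have hS1' : τ (S+1) = c2 := by
          rcases hτ (S+1) with h | h
          · exact absurd (by rw [hτS, hQ1', h]) hS2
          · exact h
        have hT1' : τ (T+1) = c1 := by
          rcases hτ (T+1) with h | h
          · exact h
          · exact absurd (by rw [hτT, hS1', h]) hT2
        intro a b
        rw [show 1+((2*m+1)+((n+1)+((l+1)+1))) = ((2*m+1)+((n+1)+((l+1)+1)))+1 by omega,
          comps_succ,
          comps_split τ (2*m+1) ((n+1)+((l+1)+1)) (P+1),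
          show P+1+(2*m+1) = Q+1 by omega,
          comps_split τ (n+1) ((l+1)+1) (Q+1),
          show Q+1+(n+1) = S+1 by omega,
          comps_split τ (l+1) 1 (S+1),
          show S+1+(l+1) = T+1 by omega,
          show comps τ (T+1) 1 [a] = applySub (τ (T+1)) [a] from rfl,
          hT1',
          comps_const τ c2 (l+1) (S+1) _ (fun j hj => by rw [hyrun2 j hj, hS1']),
          comps_const τ c1 (n+1) (Q+1) _ (fun j hj => by rw [hxrun j hj, hQ1']),
          comps_const τ c2 (2*m+1) (P+1) _ (fun j hj => by rw [hyrun j hj, hy]),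
          hx]
        exact key1 m n l a b
      · have hQ1' : τ (Q+1) = c2 := by
          rcases hτ (Q+1) with h | h
          · exact absurd (by rw [hτQ, hy, h]) hQ2
          · exact h
        have hS1' : τ (S+1) = c1 := by
          rcases hτ (S+1) with h | h
          · exact h
          · exact absurd (by rw [hτS, hQ1', h]) hS2
        have hT1' : τ (T+1) = c2 := by
          rcases hτ (T+1) with h | h
          · exact absurd (by rw [hτT, hS1', h]) hT2
          · exact h
        intro a b
        rw [show 1+((2*m+1)+((n+1)+((l+1)+1))) = ((2*m+1)+((n+1)+((l+1)+1)))+1 by omega,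
          comps_succ,
          comps_split τ (2*m+1) ((n+1)+((l+1)+1)) (P+1),
          show P+1+(2*m+1) = Q+1 by omega,
          comps_split τ (n+1) ((l+1)+1) (Q+1),
          show Q+1+(n+1) = S+1 by omega,
          comps_split τ (l+1) 1 (S+1),
          show S+1+(l+1) = T+1 by omega,
          show comps τ (T+1) 1 [a] = applySub (τ (T+1)) [a] from rfl,
          hT1',
          comps_const τ c1 (l+1) (S+1) _ (fun j hj => by rw [hyrun2 j hj, hS1']),
          comps_const τ c2 (n+1) (Q+1) _ (fun j hj => by rw [hxrun j hj, hQ1']),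
          comps_const τ c1 (2*m+1) (P+1) _ (fun j hj => by rw [hyrun j hj, hy]),
          hx]
        exact key2 m n l a b
    have hfullr : Full τ r ((1+((2*m+1)+((n+1)+((l+1)+1)))) + (P - r)) := by
      apply full_left τ hτ (P-r)
      rwa [show r + (P-r) = P by omega]
    refine ⟨r + ((1+((2*m+1)+((n+1)+((l+1)+1)))) + (P - r)), by omega, ?_⟩
    intro a b
    rw [show r + ((1+((2*m+1)+((n+1)+((l+1)+1)))) + (P - r)) - r
        = (1+((2*m+1)+((n+1)+((l+1)+1)))) + (P - r) by omega]
    exact hfullr a b
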